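/- arXiv:2604.26196 — 2 statements merged into one kernel-verified Lean document; each statement's English description precedes it below -/
import Mathlib

section
/- Let V be a finite-dimensional real vector space, 𝕋V = V × V* with pairing ⟨(u,ξ),(v,η)⟩ = ξ(v) + η(u), and L ⊆ 𝕋V a Lagrangian subspace. For any subspace I ⊆ V*, one has L[{0} × I] = L ⋆ (I° × I), where L[J] := (L ∩ J^⊥) + J, I° := {v ∈ V : ξ(v) = 0 for all ξ ∈ I}, and ⋆ is the tangent product. -/
open Module

variable {V W : Type*} [AddCommGroup V] [Module ℝ V] [AddCommGroup W] [Module ℝ W]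

/-- The canonical symmetric pairing on the generalized tangent space `𝕋V = V × V*`:
`⟨(u,ξ),(v,η)⟩ = ξ(v) + η(u)`. -/
noncomputable def gpair : (V × Module.Dual ℝ V) →ₗ[ℝ] (V × Module.Dual ℝ V) →ₗ[ℝ] ℝ :=
  LinearMap.mk₂ ℝ (fun a b => a.2 b.1 + b.2 a.1)
    (fun a a' b => by
      simp only [Prod.fst_add, Prod.snd_add, LinearMap.add_apply, map_add]; ring)
    (fun r a b => by
      simp only [Prod.smul_fst, Prod.smul_snd, LinearMap.smul_apply, map_smul,
        smul_eq_mul]; ring)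
    (fun a b b' => by
      simp only [Prod.fst_add, Prod.snd_add, LinearMap.add_apply, map_add]; ring)
    (fun r a b => by
      simp only [Prod.smul_fst, Prod.smul_snd, LinearMap.smul_apply, map_smul,
        smul_eq_mul]; ring)

/-- Orthogonal complement with respect to the canonical pairing on `𝕋V`. -/
noncomputable def gperp (S : Submodule ℝ (V × Module.Dual ℝ V)) :
    Submodule ℝ (V × Module.Dual ℝ V) where
  carrier := {a | ∀ b ∈ S, gpair a b = 0}
  add_mem' := by
    intro a b ha hb c hc
    rw [map_add, LinearMap.add_apply, ha c hc, hb c hc, add_zero]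
  zero_mem' := by
    intro c hc
    rw [map_zero, LinearMap.zero_apply]
  smul_mem' := by
    intro r a ha c hc
    rw [map_smul, LinearMap.smul_apply, ha c hc, smul_zero]

/-- A subspace of `𝕋V` is Lagrangian if it equals its own orthogonal complement. -/
def IsLagrangian (L : Submodule ℝ (V × Module.Dual ℝ V)) : Prop :=
  gperp L = L

/-- A linear map `π : V* → V` is skew-symmetric. -/
def IsSkew (π : Module.Dual ℝ V →ₗ[ℝ] V) : Prop :=
  ∀ ξ η : Module.Dual ℝ V, η (π ξ) = -(ξ (π η))

/-- The tangent product `L ⋆ R = {(u, ξ+η) : (u,ξ) ∈ L, (u,η) ∈ R}`. -/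
def tanProd (L R : Submodule ℝ (V × Module.Dual ℝ V)) :
    Submodule ℝ (V × Module.Dual ℝ V) where
  carrier := {a | ∃ ξ η : Module.Dual ℝ V, (a.1, ξ) ∈ L ∧ (a.1, η) ∈ R ∧ a.2 = ξ + η}
  add_mem' := by
    rintro a b ⟨ξ, η, h1, h2, h3⟩ ⟨ξ', η', h1', h2', h3'⟩
    refine ⟨ξ + ξ', η + η', ?_, ?_, ?_⟩
    · simpa [Prod.fst_add] using L.add_mem h1 h1'
    · simpa [Prod.fst_add] using R.add_mem h2 h2'
    · simp only [Prod.snd_add, h3, h3']; abel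
  zero_mem' := ⟨0, 0, by simpa [Prod.mk_zero_zero] using L.zero_mem, by simpa [Prod.mk_zero_zero] using R.zero_mem, by simp⟩
  smul_mem' := by
    rintro r a ⟨ξ, η, h1, h2, h3⟩
    refine ⟨r • ξ, r • η, ?_, ?_, ?_⟩
    · simpa [Prod.smul_fst] using L.smul_mem r h1
    · simpa [Prod.smul_fst] using R.smul_mem r h2
    · simp only [Prod.smul_snd, h3, smul_add]

/-- The cotangent product `L ⊛ R = {(u+v, ξ) : (u,ξ) ∈ L, (v,ξ) ∈ R}`. -/
def cotProd (L R : Submodule ℝ (V × Module.Dual ℝ V)) :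
    Submodule ℝ (V × Module.Dual ℝ V) where
  carrier := {a | ∃ u v : V, (u, a.2) ∈ L ∧ (v, a.2) ∈ R ∧ a.1 = u + v}
  add_mem' := by
    rintro a b ⟨u, v, h1, h2, h3⟩ ⟨u', v', h1', h2', h3'⟩
    refine ⟨u + u', v + v', ?_, ?_, ?_⟩
    · simpa [Prod.snd_add] using L.add_mem h1 h1'
    · simpa [Prod.snd_add] using R.add_mem h2 h2'
    · simp only [Prod.fst_add, h3, h3']; abel
  zero_mem' := ⟨0, 0, by simpa [Prod.mk_zero_zero] using L.zero_mem, by simpa [Prod.mk_zero_zero] using R.zero_mem, by simp⟩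
  smul_mem' := by
    rintro r a ⟨u, v, h1, h2, h3⟩
    refine ⟨r • u, r • v, ?_, ?_, ?_⟩
    · simpa [Prod.smul_snd] using L.smul_mem r h1
    · simpa [Prod.smul_snd] using R.smul_mem r h2
    · simp only [Prod.smul_fst, h3, smul_add]

/-- The backward image `φ^!(L) = {(u, η ∘ φ) : (φ(u), η) ∈ L}`. -/
def back (φ : V →ₗ[ℝ] W) (L : Submodule ℝ (W × Module.Dual ℝ W)) :
    Submodule ℝ (V × Module.Dual ℝ V) where
  carrier := {a | ∃ η : Module.Dual ℝ W, (φ a.1, η) ∈ L ∧ a.2 = η.comp φ}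
  add_mem' := by
    rintro a b ⟨η, h1, h2⟩ ⟨η', h1', h2'⟩
    refine ⟨η + η', ?_, ?_⟩
    · simpa [Prod.fst_add, map_add] using L.add_mem h1 h1'
    · simp only [Prod.snd_add, h2, h2', LinearMap.add_comp]
  zero_mem' := ⟨0, by simpa [Prod.mk_zero_zero] using L.zero_mem, by simp⟩
  smul_mem' := by
    rintro r a ⟨η, h1, h2⟩
    refine ⟨r • η, ?_, ?_⟩
    · simpa [Prod.smul_fst, map_smul] using L.smul_mem r h1
    · simp only [Prod.smul_snd, h2, LinearMap.smul_comp]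

/-- The forward image `φ_!(L) = {(φ(u), η) : (u, η ∘ φ) ∈ L}`. -/
def fwd (φ : V →ₗ[ℝ] W) (L : Submodule ℝ (V × Module.Dual ℝ V)) :
    Submodule ℝ (W × Module.Dual ℝ W) where
  carrier := {b | ∃ u : V, φ u = b.1 ∧ (u, b.2.comp φ) ∈ L}
  add_mem' := by
    rintro a b ⟨u, h1, h2⟩ ⟨u', h1', h2'⟩
    refine ⟨u + u', ?_, ?_⟩
    · simp only [map_add, h1, h1', Prod.fst_add]
    · have := L.add_mem h2 h2'
      simpa [Prod.snd_add, LinearMap.add_comp] using this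
  zero_mem' := ⟨0, by simp, by simpa [Prod.mk_zero_zero] using L.zero_mem⟩
  smul_mem' := by
    rintro r a ⟨u, h1, h2⟩
    refine ⟨r • u, ?_, ?_⟩
    · simp only [map_smul, h1, Prod.smul_fst]
    · have := L.smul_mem r h2
      simpa [Prod.smul_snd, LinearMap.smul_comp] using this

/-- The graph `Gr(π) = {(π(ξ), ξ) : ξ ∈ V*}` of a map `π : V* → V`. -/
def gr (π : Module.Dual ℝ V →ₗ[ℝ] V) : Submodule ℝ (V × Module.Dual ℝ V) where
  carrier := {a | π a.2 = a.1}
  add_mem' := by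
    intro a b ha hb
    simp only [Set.mem_setOf_eq, Prod.fst_add, Prod.snd_add, map_add] at *
    rw [ha, hb]
  zero_mem' := by simp
  smul_mem' := by
    intro r a ha
    simp only [Set.mem_setOf_eq, Prod.smul_fst, Prod.smul_snd, map_smul] at *
    rw [ha]

theorem stmt8 [FiniteDimensional ℝ V]
    (L : Submodule ℝ (V × Module.Dual ℝ V)) (hL : IsLagrangian L)
    (I : Submodule ℝ (Module.Dual ℝ V)) :
    (L ⊓ gperp ((⊥ : Submodule ℝ V).prod I)) ⊔ (⊥ : Submodule ℝ V).prod I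
      = tanProd L (I.dualCoannihilator.prod I) := by
  ext a
  constructor
  · intro h
    obtain ⟨y, hy, z, hz, rfl⟩ := Submodule.mem_sup.mp h
    obtain ⟨hyL, hyP⟩ := hy
    obtain ⟨hz1, hz2⟩ := Submodule.mem_prod.mp hz
    rw [Submodule.mem_bot] at hz1
    refine ⟨y.2, z.2, ?_, ⟨?_, ?_⟩, ?_⟩
    · have : ((y + z).1, y.2) = y := by
        ext <;> simp [hz1]
      rw [this]; exact hyL
    · refine (Submodule.mem_dualCoannihilator _).mpr fun ξ hξ => ?_
      have := hyP (0, ξ) (Submodule.mem_prod.mpr ⟨Submodule.mem_bot ℝ |>.mpr rfl, hξ⟩)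
      simpa [gpair, hz1] using this
    · exact hz2
    · simp
  · rintro ⟨ξ, η, hL', ⟨hco, hI⟩, ha⟩
    have hco' := (Submodule.mem_dualCoannihilator _).mp hco
    refine Submodule.mem_sup.mpr ⟨(a.1, ξ), ⟨hL', ?_⟩, (0, η), Submodule.mem_prod.mpr ⟨Submodule.mem_bot ℝ |>.mpr rfl, hI⟩, ?_⟩
    · intro b hb
      obtain ⟨hb1, hb2⟩ := Submodule.mem_prod.mp hb
      rw [Submodule.mem_bot] at hb1
      simp [gpair, hb1, hco' b.2 hb2]
    · ext <;> simp [ha]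
end

section
/- Let V be a finite-dimensional real vector space, Π : V* → V a skew-symmetric linear map, and K ⊆ V a subspace. Set H := {ξ ∈ ann(K) : Π(ξ) ∈ K}, where ann(K) := {ξ ∈ V* : ξ vanishes on K}. Then {v ∈ V : ξ(v) = 0 for all ξ ∈ H} = K + Π(ann(K)). -/
open Module

variable {V W : Type*} [AddCommGroup V] [Module ℝ V] [AddCommGroup W] [Module ℝ W]

theorem stmt16 [FiniteDimensional ℝ V]
    (p : Module.Dual ℝ V →ₗ[ℝ] V) (hp : IsSkew p)
    (K : Submodule ℝ V) :
    (K.dualAnnihilator ⊓ K.comap p).dualCoannihilator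
      = K ⊔ K.dualAnnihilator.map p := by
  have key : K.dualAnnihilator ⊓ K.comap p
      = (K ⊔ K.dualAnnihilator.map p).dualAnnihilator := by
    ext ξ
    simp only [Submodule.mem_inf, Submodule.mem_dualAnnihilator, Submodule.mem_comap,
      Submodule.mem_sup]
    constructor
    · rintro ⟨h1, h2⟩ w ⟨u, hu, v, ⟨η, hη, rfl⟩, rfl⟩
      have : ξ (p η) = -(η (p ξ)) := hp η ξ
      rw [map_add, h1 u hu, this,
        (Submodule.mem_dualAnnihilator η).mp hη (p ξ) h2]
      simp
    · intro h
      have h1 : ∀ w ∈ K, ξ w = 0 := fun w hw => h w ⟨w, hw, 0, ⟨0, by simp, by simp⟩, by simp⟩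
      refine ⟨h1, ?_⟩
      have h2 : ∀ η ∈ K.dualAnnihilator, η (p ξ) = 0 := by
        intro η hη
        have := h (p η) ⟨0, K.zero_mem, p η, ⟨η, hη, rfl⟩, by simp⟩
        rw [hp η ξ] at this
        linarith
      have : p ξ ∈ K.dualAnnihilator.dualCoannihilator :=
        (Submodule.mem_dualCoannihilator _).mpr h2
      rwa [Subspace.dualAnnihilator_dualCoannihilator_eq] at this
  rw [key, Subspace.dualAnnihilator_dualCoannihilator_eq]
end
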